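/- Let P be a monic complex polynomial of degree m ≥ 2 with roots r₁,...,r_m and coefficients P(x) = x^m + a_{m-1}x^{m-1} + ... + a₀. With T_{l,j} defined as the sum of products of l roots including r_j, and S_l(x) = Σ_{j=1}^m T_{l,j} e^{-i r_j x}, the derivatives satisfy: S_0' = -i S_1; S_l' = (-1)^{l+1} i a_{m-l} S_1 + i S_{l+1} for 0 < l < m-1; and S_{m-1}' = (-1)^m i a_1 S_1 + (-1)^m i a_0 S_0. -/

import Mathlib

open Finset Polynomial

/-- The key combinatorial recursion. -/
lemma aux_T {m : ℕ} (r : Fin m → ℂ) (l : ℕ) (j : Fin m) :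
    (∑ s ∈ Finset.univ.powersetCard (l + 1) with j ∈ s, ∏ i ∈ s, r i)
      = r j * ((∑ s ∈ Finset.univ.powersetCard l, ∏ i ∈ s, r i)
        - ∑ s ∈ Finset.univ.powersetCard l with j ∈ s, ∏ i ∈ s, r i) := by
  have h1 : (∑ s ∈ Finset.univ.powersetCard l, ∏ i ∈ s, r i)
      - (∑ s ∈ Finset.univ.powersetCard l with j ∈ s, ∏ i ∈ s, r i)
      = ∑ s ∈ Finset.univ.powersetCard l with j ∉ s, ∏ i ∈ s, r i := by
    rw [← Finset.sum_filter_add_sum_filter_not (Finset.univ.powersetCard l)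
      (fun s => j ∈ s) (fun s => ∏ i ∈ s, r i)]
    ring
  rw [h1, Finset.mul_sum]
  refine Finset.sum_nbij' (fun s => s.erase j) (fun s => insert j s) ?_ ?_ ?_ ?_ ?_
  · intro s hs
    simp only [Finset.mem_filter, Finset.mem_powersetCard] at hs ⊢
    refine ⟨⟨Finset.subset_univ _, ?_⟩, Finset.notMem_erase _ _⟩
    rw [Finset.card_erase_of_mem hs.2, hs.1.2]
    omega
  · intro s hs
    simp only [Finset.mem_filter, Finset.mem_powersetCard] at hs ⊢
    refine ⟨⟨Finset.subset_univ _, ?_⟩, Finset.mem_insert_self _ _⟩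
    rw [Finset.card_insert_of_notMem hs.2, hs.1.2]
  · intro s hs
    simp only [Finset.mem_filter] at hs
    exact Finset.insert_erase hs.2
  · intro s hs
    simp only [Finset.mem_filter] at hs
    exact Finset.erase_insert hs.2
  · intro s hs
    simp only [Finset.mem_filter] at hs
    exact (Finset.mul_prod_erase s r hs.2).symm

lemma aux_coeff {m : ℕ} (r : Fin m → ℂ) (a : ℕ → ℂ)
    (hP : ∀ x : ℂ, ∏ j, (x - r j) = x ^ m + ∑ i ∈ Finset.range m, a i * x ^ i)
    {k : ℕ} (hk : k < m) :
    a k = (-1) ^ (m - k) * ∑ s ∈ Finset.univ.powersetCard (m - k), ∏ i ∈ s, r i := by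
  have hpq : (∏ j, (X - C (r j)) : ℂ[X])
      = X ^ m + ∑ i ∈ Finset.range m, C (a i) * X ^ i := by
    apply Polynomial.funext
    intro x
    simp only [Polynomial.eval_prod, Polynomial.eval_add, Polynomial.eval_pow,
      Polynomial.eval_X, Polynomial.eval_sub, Polynomial.eval_C,
      Polynomial.eval_finset_sum, Polynomial.eval_mul]
    exact hP x
  have hco := congrArg (fun p : ℂ[X] => p.coeff k) hpq
  simp only [Polynomial.coeff_add, Polynomial.coeff_X_pow, Polynomial.finset_sum_coeff,
    Polynomial.coeff_C_mul, mul_ite, mul_one, mul_zero, Finset.sum_ite_eq,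
    Finset.mem_range, hk, if_true, if_neg hk.ne, zero_add] at hco
  have hprod : (∏ j, (X - C (r j)) : ℂ[X])
      = ((Finset.univ.val.map r).map fun t => X - C t).prod := by
    rw [Multiset.map_map]; rfl
  have hcard : Multiset.card (Finset.univ.val.map r) = m := by simp
  have hle : k ≤ Multiset.card (Finset.univ.val.map r) := by rw [hcard]; omega
  have h2 := Multiset.prod_X_sub_C_coeff (Finset.univ.val.map r) hle
  rw [← hprod, hcard, Finset.esymm_map_val, hco] at h2
  exact h2

theorem gen_trig_deriv_system (m : ℕ) (hm : 2 ≤ m) (r : Fin m → ℂ) (a : ℕ → ℂ)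
    (hP : ∀ x : ℂ, ∏ j, (x - r j) = x ^ m + ∑ i ∈ Finset.range m, a i * x ^ i)
    (T : ℕ → Fin m → ℂ)
    (hT0 : ∀ j, T 0 j = 1)
    (hT : ∀ l, 1 ≤ l → ∀ j, T l j =
      ∑ s ∈ Finset.univ.powersetCard l with j ∈ s, ∏ i ∈ s, r i)
    (S : ℕ → ℂ → ℂ)
    (hS : ∀ l x, S l x = ∑ j, T l j * Complex.exp (-Complex.I * r j * x)) :
    (∀ x : ℂ, HasDerivAt (S 0) (-Complex.I * S 1 x) x) ∧
    (∀ l, 0 < l → l < m - 1 → ∀ x : ℂ,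
      HasDerivAt (S l)
        ((-1) ^ (l + 1) * Complex.I * a (m - l) * S 1 x + Complex.I * S (l + 1) x) x) ∧
    (∀ x : ℂ, HasDerivAt (S (m - 1))
      ((-1) ^ m * Complex.I * a 1 * S 1 x + (-1) ^ m * Complex.I * a 0 * S 0 x) x) := by
  have hderiv : ∀ (c : Fin m → ℂ) (x : ℂ),
      HasDerivAt (fun y => ∑ j, c j * Complex.exp (-Complex.I * r j * y))
        (∑ j, c j * (-Complex.I * r j * Complex.exp (-Complex.I * r j * x))) x := by
    intro c x
    apply HasDerivAt.fun_sum
    intro j _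
    have h1 : HasDerivAt (fun y : ℂ => -Complex.I * r j * y) (-Complex.I * r j) x := by
      simpa using (hasDerivAt_id x).const_mul (-Complex.I * r j)
    have := (h1.cexp).const_mul (c j)
    convert this using 1
    · rfl
    ring
  set E : ℕ → ℂ := fun l => ∑ s ∈ Finset.univ.powersetCard l, ∏ i ∈ s, r i with hE
  have hT1 : ∀ j, T 1 j = r j := by
    intro j
    rw [hT 1 le_rfl j]
    have h := aux_T r 0 j
    simp only [zero_add] at h
    rw [h]
    have h0 : (Finset.univ.powersetCard 0 : Finset (Finset (Fin m))) = {∅} :=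
      Finset.powersetCard_zero _
    rw [h0]
    simp [Finset.filter_singleton]
  have hrec : ∀ l, 1 ≤ l → ∀ j, T (l + 1) j = r j * (E l - T l j) := by
    intro l hl j
    rw [hT (l + 1) (by omega) j, hT l hl j, aux_T r l j]
  have hSfun : ∀ l, S l = fun y => ∑ j, T l j * Complex.exp (-Complex.I * r j * y) :=
    fun l => funext (hS l)
  refine ⟨?_, ?_, ?_⟩
  · intro x
    rw [hSfun 0]
    convert hderiv (T 0) x using 1
    rw [hS 1, Finset.mul_sum]
    refine Finset.sum_congr rfl fun j _ => ?_
    rw [hT1 j, hT0 j]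
    ring
  · intro l hl0 hlm x
    have ha : a (m - l) = (-1) ^ l * E l := by
      have h := aux_coeff r a hP (show m - l < m by omega)
      rw [show m - (m - l) = l from by omega] at h
      rw [h, hE]
    have hu : ((-1 : ℂ)) ^ l * (-1) ^ l = 1 := by
      rw [← mul_pow]; norm_num
    have hsign : ((-1 : ℂ)) ^ (l + 1) * a (m - l) = -E l := by
      rw [ha]
      calc ((-1 : ℂ)) ^ (l + 1) * ((-1) ^ l * E l)
          = -(((-1 : ℂ)) ^ l * (-1) ^ l) * E l := by ring
        _ = -E l := by rw [hu]; ring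
    rw [hSfun l]
    convert hderiv (T l) x using 1
    rw [hS 1, hS (l + 1), Finset.mul_sum, Finset.mul_sum,
      ← Finset.sum_add_distrib]
    refine Finset.sum_congr rfl fun j _ => ?_
    rw [hT1 j, hrec l (by omega) j]
    set e := Complex.exp (-Complex.I * r j * x)
    linear_combination (Complex.I * r j * e) * hsign
  · intro x
    have ha1 : a 1 = (-1) ^ (m - 1) * E (m - 1) := by
      have h := aux_coeff r a hP (show 1 < m by omega)
      rw [h, hE]
    have ha0 : a 0 = (-1) ^ m * E m := by
      have h := aux_coeff r a hP (show 0 < m by omega)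
      rw [Nat.sub_zero] at h
      rw [h, hE]
    have hu : ((-1 : ℂ)) ^ (m - 1) * (-1) ^ (m - 1) = 1 := by
      rw [← mul_pow]; norm_num
    have hu0 : ((-1 : ℂ)) ^ m * (-1) ^ m = 1 := by
      rw [← mul_pow]; norm_num
    have hv : ((-1 : ℂ)) ^ m = (-1) ^ (m - 1) * (-1) := by
      rw [← pow_succ]
      congr 1
      omega
    have hs1 : ((-1 : ℂ)) ^ m * a 1 = -E (m - 1) := by
      rw [ha1, hv]
      linear_combination (-E (m - 1)) * hu
    have hs0 : ((-1 : ℂ)) ^ m * a 0 = E m := by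
      rw [ha0]
      linear_combination (E m) * hu0
    have hTm : ∀ j : Fin m, r j * (E (m - 1) - T (m - 1) j) = E m := by
      intro j
      have h := hrec (m - 1) (by omega) j
      have hm1 : m - 1 + 1 = m := by omega
      rw [hm1] at h
      rw [← h, hT m (by omega) j]
      have huniv : (Finset.univ.powersetCard m : Finset (Finset (Fin m))) = {Finset.univ} := by
        have h2 := Finset.powersetCard_self (Finset.univ : Finset (Fin m))
        simpa using h2
      rw [hE]
      simp only [huniv]
      simp [Finset.filter_singleton]
    rw [hSfun (m - 1)]
    convert hderiv (T (m - 1)) x using 1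
    rw [hS 1, hS 0, Finset.mul_sum, Finset.mul_sum,
      ← Finset.sum_add_distrib]
    refine Finset.sum_congr rfl fun j _ => ?_
    rw [hT1 j, hT0 j]
    have hkey := hTm j
    set e := Complex.exp (-Complex.I * r j * x)
    linear_combination (Complex.I * r j * e) * hs1 + (Complex.I * e) * hs0 +
      (-Complex.I * e) * hkey
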